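/- Let R be a commutative ring with Z(R) ⊆ Jac(R) and let m be a maximal ideal of R. Then (R, m) has the regular total order property if and only if for all x, y ∈ R with x regular, the principal ideals xR_m and yR_m of R_m are comparable under inclusion. -/

import Mathlib

open Pointwise

/-- The set of zero-divisors of a commutative ring `A`. -/
def zdivSet (A : Type*) [CommRing A] : Set A := {a | ∃ b, b ≠ 0 ∧ a * b = 0}

/-- `(R, p)` has the regular total order property if for every pair of ideals of `R`,
at least one of which is regular, the extended ideals in `R_p` are comparable. -/
def HasRegularTotalOrderProperty (R : Type*) [CommRing R] (p : Ideal R) [p.IsPrime] : Prop :=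
  ∀ a b : Ideal R,
    ((∃ r ∈ a, r ∈ nonZeroDivisors R) ∨ (∃ r ∈ b, r ∈ nonZeroDivisors R)) →
      (a.map (algebraMap R (Localization.AtPrime p)) ≤
          b.map (algebraMap R (Localization.AtPrime p)) ∨
        b.map (algebraMap R (Localization.AtPrime p)) ≤
          a.map (algebraMap R (Localization.AtPrime p)))

theorem stmt4 {R : Type*} [CommRing R]
    (hZJ : zdivSet R ⊆ (Ideal.jacobson (⊥ : Ideal R) : Set R))
    (m : Ideal R) [m.IsMaximal] :
    HasRegularTotalOrderProperty R m ↔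
      ∀ x y : R, x ∈ nonZeroDivisors R →
        (Ideal.span {algebraMap R (Localization.AtPrime m) x} ≤
            Ideal.span {algebraMap R (Localization.AtPrime m) y} ∨
          Ideal.span {algebraMap R (Localization.AtPrime m) y} ≤
            Ideal.span {algebraMap R (Localization.AtPrime m) x}) := by
  set S := Localization.AtPrime m with hS
  set f := algebraMap R S with hf
  -- zero divisors lie in m
  have hZm : zdivSet R ⊆ (m : Set R) := by
    intro x hx
    have h1 : x ∈ Ideal.jacobson (⊥ : Ideal R) := hZJ hx
    rw [Ideal.jacobson] at h1
    exact Ideal.mem_sInf.mp h1 ⟨bot_le, inferInstance⟩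
  -- elements outside m are nonzerodivisors
  have hsub : m.primeCompl ≤ nonZeroDivisors R := by
    intro u hu
    rw [mem_nonZeroDivisors_iff_right]
    intro x hxu
    by_contra hx
    exact hu (hZm ⟨x, hx, mul_comm u x ▸ hxu⟩)
  have hinj : Function.Injective f := IsLocalization.injective S hsub
  -- images of regular elements are regular in S
  have hreg : ∀ r : R, r ∈ nonZeroDivisors R → f r ∈ nonZeroDivisors S := by
    intro r hr
    rw [mem_nonZeroDivisors_iff_right]
    intro z hz
    obtain ⟨⟨c, s⟩, hcs⟩ := IsLocalization.surj m.primeCompl z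
    have hsu : IsUnit (f (s : R)) := IsLocalization.map_units S s
    have h1 : f (c * r) = 0 := by
      rw [map_mul]
      calc f c * f r = z * f (s : R) * f r := by rw [← hcs]
        _ = z * f r * f (s : R) := by ring
        _ = 0 := by rw [hz, zero_mul]
    have h2 : c * r = 0 := by
      apply hinj
      rw [h1, map_zero]
    have hc : c = 0 := mem_nonZeroDivisors_iff_right.mp hr c h2
    have : z * f (s : R) = 0 := by rw [hcs, hc, map_zero]
    exact (hsu.mul_left_eq_zero).mp this
  -- regular elements of S yield regular elements of R
  have hregback : ∀ r : R, f r ∈ nonZeroDivisors S → r ∈ nonZeroDivisors R := by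
    intro r hr
    rw [mem_nonZeroDivisors_iff_right]
    intro x hx
    apply hinj
    rw [map_zero]
    exact mem_nonZeroDivisors_iff_right.mp hr (f x) (by rw [← map_mul, hx, map_zero])
  constructor
  · -- forward direction
    intro H x y hx
    have := H (Ideal.span {x}) (Ideal.span {y})
      (Or.inl ⟨x, Ideal.mem_span_singleton_self x, hx⟩)
    rwa [Ideal.map_span, Ideal.map_span, Set.image_singleton, Set.image_singleton] at this
  · -- backward direction
    intro h
    -- comparability for arbitrary elements of S with regular first entry
    have hcmp : ∀ x y : S, x ∈ nonZeroDivisors S →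
        (Ideal.span {x} ≤ Ideal.span {y} ∨ Ideal.span {y} ≤ Ideal.span {x}) := by
      intro x y hx
      obtain ⟨⟨x', sx⟩, hx'⟩ := IsLocalization.surj m.primeCompl x
      obtain ⟨⟨y', sy⟩, hy'⟩ := IsLocalization.surj m.primeCompl y
      have husx : IsUnit (f (sx : R)) := IsLocalization.map_units S sx
      have husy : IsUnit (f (sy : R)) := IsLocalization.map_units S sy
      have hxspan : Ideal.span {x} = Ideal.span {f x'} := by
        rw [← hx', Ideal.span_singleton_mul_right_unit husx]
      have hyspan : Ideal.span {y} = Ideal.span {f y'} := by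
        rw [← hy', Ideal.span_singleton_mul_right_unit husy]
      have hx'reg : x' ∈ nonZeroDivisors R := by
        apply hregback
        rw [← hx']
        exact mul_mem hx (husx.mem_nonZeroDivisors)
      rw [hxspan, hyspan]
      exact h x' y' hx'reg
    -- key lemma: a regular implies comparability
    have key : ∀ a b : Ideal R, (∃ r ∈ a, r ∈ nonZeroDivisors R) →
        (a.map f ≤ b.map f ∨ b.map f ≤ a.map f) := by
      rintro a b ⟨r, hra, hr⟩
      by_cases hba : b.map f ≤ a.map f
      · exact Or.inr hba
      left
      have hfr : f r ∈ nonZeroDivisors S := hreg r hr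
      have hfra : f r ∈ a.map f := Ideal.mem_map_of_mem f hra
      -- find b₀ ∈ b with f b₀ ∉ a.map f
      obtain ⟨b₀, hb₀b, hb₀⟩ : ∃ b₀ ∈ b, f b₀ ∉ a.map f := by
        by_contra hcon
        push_neg at hcon
        exact hba (Ideal.map_le_iff_le_comap.mpr fun x hx => hcon x hx)
      -- f r ∈ span {f b₀}
      obtain ⟨w, hw⟩ : f b₀ ∣ f r := by
        rcases hcmp (f r) (f b₀) hfr with h1 | h1
        · exact Ideal.span_singleton_le_span_singleton.mp h1
        · exact absurd ((h1.trans (Ideal.span_le.mpr (Set.singleton_subset_iff.mpr hfra)))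
            (Ideal.mem_span_singleton_self _)) hb₀
      have hfrb : f r ∈ b.map f := by
        rw [hw]
        exact Ideal.mul_mem_right _ _ (Ideal.mem_map_of_mem f hb₀b)
      rw [Ideal.map_le_iff_le_comap]
      intro a₀ ha₀
      show f a₀ ∈ b.map f
      rcases hcmp (f r) (f a₀) hfr with h1 | h1
      · -- f r = f a₀ * v
        obtain ⟨v, hv⟩ : f a₀ ∣ f r := Ideal.span_singleton_le_span_singleton.mp h1
        -- v and w are regular in S
        have hvreg : v ∈ nonZeroDivisors S := by
          rw [mem_nonZeroDivisors_iff_right]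
          intro z hz
          apply mem_nonZeroDivisors_iff_right.mp hfr z
          rw [hv]
          calc z * (f a₀ * v) = z * v * f a₀ := by ring
            _ = 0 := by rw [hz, zero_mul]
        have hwreg : w ∈ nonZeroDivisors S := by
          rw [mem_nonZeroDivisors_iff_right]
          intro z hz
          apply mem_nonZeroDivisors_iff_right.mp hfr z
          rw [hw]
          calc z * (f b₀ * w) = z * w * f b₀ := by ring
            _ = 0 := by rw [hz, zero_mul]
        rcases hcmp v w hvreg with h2 | h2
        · -- w ∣ v : v = w * z, then f b₀ = f a₀ * z ∈ a.map f, contradiction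
          obtain ⟨z, hz⟩ := Ideal.span_singleton_le_span_singleton.mp h2
          exfalso
          apply hb₀
          have hcancel : f b₀ * w = f a₀ * z * w := by
            calc f b₀ * w = f r := hw.symm
              _ = f a₀ * (w * z) := by rw [hv, hz]
              _ = f a₀ * z * w := by ring
          have : f b₀ = f a₀ * z := by
            have := mem_nonZeroDivisors_iff_right.mp hwreg (f b₀ - f a₀ * z) (by rw [sub_mul, hcancel, sub_self])
            linear_combination this
          rw [this]
          exact Ideal.mul_mem_right _ _ (Ideal.mem_map_of_mem f ha₀)
        · -- v ∣ w : w = v * z, then f a₀ = f b₀ * z ∈ b.map f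
          obtain ⟨z, hz⟩ := Ideal.span_singleton_le_span_singleton.mp h2
          have hcancel : f a₀ * v = f b₀ * z * v := by
            calc f a₀ * v = f r := hv.symm
              _ = f b₀ * (v * z) := by rw [hw, hz]
              _ = f b₀ * z * v := by ring
          have heq : f a₀ = f b₀ * z := by
            have := mem_nonZeroDivisors_iff_right.mp hvreg (f a₀ - f b₀ * z) (by rw [sub_mul, hcancel, sub_self])
            linear_combination this
          rw [heq]
          exact Ideal.mul_mem_right _ _ (Ideal.mem_map_of_mem f hb₀b)
      · -- f a₀ ∈ span {f r} ⊆ b.map f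
        have : f a₀ ∈ Ideal.span {f r} := h1 (Ideal.mem_span_singleton_self _)
        exact (Ideal.span_le.mpr (Set.singleton_subset_iff.mpr hfrb)) this
    intro a b hab
    rcases hab with h1 | h1
    · exact key a b h1
    · exact (key b a h1).symm
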